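/- Let U ⊆ ℝⁿ be open, g : U → (ℝⁿ →ₗ ℝⁿ →ₗ ℝ) a smooth map with each g(q) a symmetric nondegenerate bilinear form, with Christoffel symbols Γˡ_{ij}, and let α : U × ℝⁿ → (ℝⁿ)* be a smooth horizontal 1-form. Then α is a contact form (α(q,v)(v) = 0 for all (q,v) ∈ U × ℝⁿ) if and only if for every twice-differentiable curve x : I → U (I ⊆ ℝ an open interval) satisfying the Newton equation (x'')ˡ(t) = −( Σ_k g^{lk}(x(t)) α_k(x(t), x'(t)) + Σ_{i,j} Γˡ_{ij}(x(t)) (x')ⁱ(t) (x')ʲ(t) ), the function t ↦ g(x(t))(x'(t), x'(t)) is constant on I. (The converse direction uses that through each initial condition (q₀, v₀) ∈ U × ℝⁿ there passes a local solution of the Newton equation, which holds by Picard–Lindelöf since g and α are smooth.) -/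

import Mathlib

/-- The `i`-th standard basis vector of `ℝⁿ`. -/
noncomputable def basisVec {n : ℕ} (i : Fin n) : Fin n → ℝ := Pi.single i 1

/-- The Christoffel symbols `Γˡ_{ij}(q) = (1/2) Σ_k g^{lk}(q) (∂_i g_{jk} + ∂_j g_{ik} − ∂_k g_{ij})(q)`
of a metric `g` with inverse coefficients `ginv`. -/
noncomputable def christoffel {n : ℕ}
    (g : (Fin n → ℝ) → ((Fin n → ℝ) →L[ℝ] (Fin n → ℝ) →L[ℝ] ℝ))
    (ginv : (Fin n → ℝ) → Fin n → Fin n → ℝ)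
    (l i j : Fin n) (q : Fin n → ℝ) : ℝ :=
  (1/2) * ∑ k, ginv q l k *
    (fderiv ℝ (fun p => g p (basisVec j) (basisVec k)) q (basisVec i)
      + fderiv ℝ (fun p => g p (basisVec i) (basisVec k)) q (basisVec j)
      - fderiv ℝ (fun p => g p (basisVec i) (basisVec j)) q (basisVec k))


open Finset

section Aux
variable {n : ℕ}

lemma sum_smul_basisVec (v : Fin n → ℝ) : ∑ i, v i • basisVec i = v := by
  ext j
  simp [basisVec, Pi.single_apply, Finset.sum_apply]

lemma clm_expand (T : (Fin n → ℝ) →L[ℝ] ℝ) (v : Fin n → ℝ) :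
    T v = ∑ i, v i * T (basisVec i) := by
  conv_lhs => rw [← sum_smul_basisVec v]
  rw [map_sum]
  simp [smul_eq_mul]

lemma clm2_expand_left (T : (Fin n → ℝ) →L[ℝ] (Fin n → ℝ) →L[ℝ] ℝ) (u w : Fin n → ℝ) :
    T u w = ∑ i, u i * T (basisVec i) w := by
  conv_lhs => rw [← sum_smul_basisVec u]
  rw [map_sum]
  simp [ContinuousLinearMap.sum_apply, smul_eq_mul]

lemma clm2_expand (T : (Fin n → ℝ) →L[ℝ] (Fin n → ℝ) →L[ℝ] ℝ) (u w : Fin n → ℝ) :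
    T u w = ∑ i, ∑ j, u i * w j * T (basisVec i) (basisVec j) := by
  rw [clm2_expand_left]
  refine Finset.sum_congr rfl fun i _ => ?_
  rw [clm_expand (T (basisVec i)) w, Finset.mul_sum]
  refine Finset.sum_congr rfl fun j _ => by ring

lemma contDiffAt_det {m : ℕ∞} (M : (Fin n → ℝ) → Matrix (Fin n) (Fin n) ℝ)
    {q₀ : Fin n → ℝ} (h : ∀ i j, ContDiffAt ℝ m (fun q => M q i j) q₀) :
    ContDiffAt ℝ m (fun q => (M q).det) q₀ := by
  simp only [Matrix.det_apply']
  refine ContDiffAt.sum fun σ _ => ContDiffAt.mul contDiffAt_const ?_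
  have := contDiffAt_prod' (𝕜 := ℝ) (n := m) (x := q₀) (t := Finset.univ)
    (f := fun i q => M q (σ i) i) (fun i _ => h (σ i) i)
  convert this using 1
  ext q
  simp [Finset.prod_apply]

end Aux

section Aux2
variable {n : ℕ}

lemma entry_contDiffOn {U : Set (Fin n → ℝ)}
    (g : (Fin n → ℝ) → ((Fin n → ℝ) →L[ℝ] (Fin n → ℝ) →L[ℝ] ℝ))
    (hg : ContDiffOn ℝ (⊤ : ℕ∞) g U) (u w : Fin n → ℝ) :
    ContDiffOn ℝ (⊤ : ℕ∞) (fun q => g q u w) U := by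
  have Φ : ((Fin n → ℝ) →L[ℝ] (Fin n → ℝ) →L[ℝ] ℝ) →L[ℝ] ℝ :=
    (ContinuousLinearMap.apply ℝ ℝ w).comp
      (ContinuousLinearMap.apply ℝ ((Fin n → ℝ) →L[ℝ] ℝ) u)
  exact ((ContinuousLinearMap.apply ℝ ℝ w).comp
      (ContinuousLinearMap.apply ℝ ((Fin n → ℝ) →L[ℝ] ℝ) u)).contDiff.comp_contDiffOn hg

/-- On `U`, `ginv` agrees with the matrix inverse, hence is smooth at points of `U`. -/
lemma ginv_contDiffAt {U : Set (Fin n → ℝ)} (hU : IsOpen U)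
    (g : (Fin n → ℝ) → ((Fin n → ℝ) →L[ℝ] (Fin n → ℝ) →L[ℝ] ℝ))
    (hg : ContDiffOn ℝ (⊤ : ℕ∞) g U)
    (ginv : (Fin n → ℝ) → Fin n → Fin n → ℝ)
    (hginv : ∀ q ∈ U, ∀ i j : Fin n,
      (∑ k, g q (basisVec i) (basisVec k) * ginv q k j) = if i = j then 1 else 0)
    {q₀ : Fin n → ℝ} (hq₀ : q₀ ∈ U) (i j : Fin n) :
    ContDiffAt ℝ (⊤ : ℕ∞) (fun q => ginv q i j) q₀ := by
  set Gm : (Fin n → ℝ) → Matrix (Fin n) (Fin n) ℝ :=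
    fun q => Matrix.of (fun a b => g q (basisVec a) (basisVec b)) with hGm
  have hmul : ∀ q ∈ U, Gm q * Matrix.of (ginv q) = 1 := by
    intro q hq
    ext a b
    simp only [Matrix.mul_apply, Matrix.one_apply, hGm, Matrix.of_apply]
    exact hginv q hq a b
  have hinv_eq : ∀ q ∈ U, Matrix.of (ginv q) = (Gm q)⁻¹ := by
    intro q hq
    exact (Matrix.inv_eq_right_inv (hmul q hq)).symm
  have hdet_ne : (Gm q₀).det ≠ 0 := by
    have h1 : (Gm q₀).det * (Matrix.of (ginv q₀)).det = 1 := by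
      rw [← Matrix.det_mul, hmul q₀ hq₀, Matrix.det_one]
    intro h; rw [h, zero_mul] at h1; exact zero_ne_one h1
  have hentry : ∀ a b, ContDiffAt ℝ (⊤ : ℕ∞) (fun q => Gm q a b) q₀ :=
    fun a b => (entry_contDiffOn g hg _ _ q₀ hq₀).contDiffAt (hU.mem_nhds hq₀)
  have hdet : ContDiffAt ℝ (⊤ : ℕ∞) (fun q => (Gm q).det) q₀ := contDiffAt_det Gm hentry
  have hadj : ContDiffAt ℝ (⊤ : ℕ∞) (fun q => (Gm q).adjugate i j) q₀ := by
    simp only [Matrix.adjugate_apply]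
    refine contDiffAt_det _ fun a b => ?_
    by_cases hab : a = j
    · simp only [hab, Matrix.updateRow_self]
      exact contDiffAt_const
    · simp only [Matrix.updateRow_ne hab]
      exact hentry a b
  have hsmooth : ContDiffAt ℝ (⊤ : ℕ∞) (fun q => ((Gm q).det)⁻¹ * (Gm q).adjugate i j) q₀ :=
    (hdet.inv hdet_ne).mul hadj
  refine hsmooth.congr_of_eventuallyEq ?_
  filter_upwards [hU.mem_nhds hq₀] with q hq
  rw [show ginv q i j = Matrix.of (ginv q) i j from rfl, hinv_eq q hq, Matrix.inv_def]
  have hdq : (Gm q).det ≠ 0 := by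
    have h1 : (Gm q).det * (Matrix.of (ginv q)).det = 1 := by
      rw [← Matrix.det_mul, hmul q hq, Matrix.det_one]
    intro h; rw [h, zero_mul] at h1; exact zero_ne_one h1
  simp [Ring.inverse_eq_inv', Matrix.smul_apply, smul_eq_mul]

end Aux2

section Aux3
variable {n : ℕ}

lemma contract (G gi : Fin n → Fin n → ℝ)
    (hδ : ∀ m k, ∑ l, G l m * gi l k = if m = k then 1 else 0) (c w : Fin n → ℝ) :
    ∑ l, (∑ k, gi l k * c k) * (∑ m, w m * G l m) = ∑ k, w k * c k := by
  calc ∑ l, (∑ k, gi l k * c k) * (∑ m, w m * G l m)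
      = ∑ l, ∑ k, gi l k * c k * (∑ m, w m * G l m) := by
        simp [Finset.sum_mul]
    _ = ∑ k, ∑ l, gi l k * c k * (∑ m, w m * G l m) := Finset.sum_comm
    _ = ∑ k, ∑ l, ∑ m, gi l k * c k * (w m * G l m) := by
        refine Finset.sum_congr rfl fun k _ => Finset.sum_congr rfl fun l _ => ?_
        rw [Finset.mul_sum]
    _ = ∑ k, ∑ m, ∑ l, gi l k * c k * (w m * G l m) :=
        Finset.sum_congr rfl fun k _ => Finset.sum_comm
    _ = ∑ k, ∑ m, (c k * w m) * ∑ l, G l m * gi l k := by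
        refine Finset.sum_congr rfl fun k _ => Finset.sum_congr rfl fun m _ => ?_
        rw [Finset.mul_sum]
        exact Finset.sum_congr rfl fun l _ => by ring
    _ = ∑ k, ∑ m, (c k * w m) * (if m = k then 1 else 0) := by
        refine Finset.sum_congr rfl fun k _ => Finset.sum_congr rfl fun m _ => ?_
        rw [hδ]
    _ = ∑ k, w k * c k := by
        simp [mul_ite, Finset.sum_ite_eq', mul_comm]

lemma fderiv_entry {U : Set (Fin n → ℝ)} (hU : IsOpen U)
    (g : (Fin n → ℝ) → ((Fin n → ℝ) →L[ℝ] (Fin n → ℝ) →L[ℝ] ℝ))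
    (hg : ContDiffOn ℝ (⊤ : ℕ∞) g U) {q : Fin n → ℝ} (hq : q ∈ U)
    (u₁ u₂ w : Fin n → ℝ) :
    fderiv ℝ (fun p => g p u₁ u₂) q w = fderiv ℝ g q w u₁ u₂ := by
  have hdg : DifferentiableAt ℝ g q :=
    (hg.contDiffAt (hU.mem_nhds hq)).differentiableAt (by simp)
  set Φ : ((Fin n → ℝ) →L[ℝ] (Fin n → ℝ) →L[ℝ] ℝ) →L[ℝ] ℝ :=
    (ContinuousLinearMap.apply ℝ ℝ u₂).comp
      (ContinuousLinearMap.apply ℝ ((Fin n → ℝ) →L[ℝ] ℝ) u₁) with hΦ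
  have h : HasFDerivAt (fun p => Φ (g p)) (Φ.comp (fderiv ℝ g q)) q := by
    have h0 := (hdg.hasFDerivAt.clm_apply (hasFDerivAt_const u₁ q)).clm_apply (hasFDerivAt_const u₂ q)
    refine (h0.congr_fderiv ?_).congr_of_eventuallyEq (Filter.Eventually.of_forall fun p => ?_)
    · ext w; simp [hΦ]
    · simp [hΦ]
  have heq : (fun p => g p u₁ u₂) = fun p => Φ (g p) := rfl
  rw [heq, h.fderiv]
  rfl

end Aux3

section KeyB
variable {n : ℕ}

/-- The key pointwise identity: along Newton acceleration `a` at `(q, v)`,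
`(∂_v g)(v,v) + g(a,v) + g(v,a) = -2 α(q,v)(v)`. -/
lemma keyB {U : Set (Fin n → ℝ)} (hU : IsOpen U)
    (g : (Fin n → ℝ) → ((Fin n → ℝ) →L[ℝ] (Fin n → ℝ) →L[ℝ] ℝ))
    (hg : ContDiffOn ℝ (⊤ : ℕ∞) g U)
    (hsymm : ∀ q ∈ U, ∀ u w : Fin n → ℝ, g q u w = g q w u)
    (ginv : (Fin n → ℝ) → Fin n → Fin n → ℝ)
    (hginv : ∀ q ∈ U, ∀ i j : Fin n,
      (∑ k, g q (basisVec i) (basisVec k) * ginv q k j) = if i = j then 1 else 0)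
    (α : (Fin n → ℝ) × (Fin n → ℝ) → ((Fin n → ℝ) →L[ℝ] ℝ))
    {q : Fin n → ℝ} (hq : q ∈ U) (v a : Fin n → ℝ)
    (ha : ∀ l, a l = -((∑ k, ginv q l k * α (q, v) (basisVec k))
        + ∑ i, ∑ j, christoffel g ginv l i j q * v i * v j)) :
    fderiv ℝ g q v v v + g q a v + g q v a = -(2 * α (q, v) v) := by
  set G : Fin n → Fin n → ℝ := fun i j => g q (basisVec i) (basisVec j) with hG
  set D : Fin n → Fin n → Fin n → ℝ :=
    fun a b c => fderiv ℝ (fun p => g p (basisVec b) (basisVec c)) q (basisVec a) with hD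
  set S : ℝ := ∑ a, ∑ b, ∑ c, v a * v b * v c * D a b c with hS
  have hGsymm : ∀ i j, G i j = G j i := fun i j => hsymm q hq _ _
  have hδ : ∀ m k, ∑ l, G l m * ginv q l k = if m = k then 1 else 0 := by
    intro m k
    calc ∑ l, G l m * ginv q l k = ∑ l, G m l * ginv q l k :=
          Finset.sum_congr rfl fun l _ => by rw [hGsymm]
      _ = if m = k then 1 else 0 := hginv q hq m k
  set u : Fin n → ℝ := fun l => g q (basisVec l) v with hu
  have huG : ∀ l, u l = ∑ m, v m * G l m := fun l => clm_expand (g q (basisVec l)) v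
  -- the two g-terms
  have hgav : g q a v = ∑ l, a l * u l := clm2_expand_left (g q) a v
  have hgva : g q v a = ∑ l, a l * u l := by rw [hsymm q hq v a]; exact hgav
  -- first term equals S
  have hfirst : fderiv ℝ g q v v v = S := by
    rw [clm2_expand (fderiv ℝ g q v) v v]
    have hbc : ∀ b c, fderiv ℝ g q v (basisVec b) (basisVec c) = ∑ a, v a * D a b c := by
      intro b c
      rw [← fderiv_entry hU g hg hq (basisVec b) (basisVec c) v]
      exact clm_expand (fderiv ℝ (fun p => g p (basisVec b) (basisVec c)) q) v
    calc ∑ b, ∑ c, v b * v c * fderiv ℝ g q v (basisVec b) (basisVec c)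
        = ∑ b, ∑ c, ∑ a, v a * v b * v c * D a b c := by
          refine Finset.sum_congr rfl fun b _ => Finset.sum_congr rfl fun c _ => ?_
          rw [hbc, Finset.mul_sum]
          exact Finset.sum_congr rfl fun a _ => by ring
      _ = ∑ b, ∑ a, ∑ c, v a * v b * v c * D a b c :=
          Finset.sum_congr rfl fun b _ => Finset.sum_comm
      _ = ∑ a, ∑ b, ∑ c, v a * v b * v c * D a b c := Finset.sum_comm
      _ = S := rfl
  -- contraction with the force term
  have hclaim1 : ∑ l, (∑ k, ginv q l k * α (q, v) (basisVec k)) * u l = α (q, v) v := by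
    calc ∑ l, (∑ k, ginv q l k * α (q, v) (basisVec k)) * u l
        = ∑ l, (∑ k, ginv q l k * α (q, v) (basisVec k)) * (∑ m, v m * G l m) := by
          refine Finset.sum_congr rfl fun l _ => by rw [huG]
      _ = ∑ k, v k * α (q, v) (basisVec k) :=
          contract G (fun l k => ginv q l k) hδ _ v
      _ = α (q, v) v := (clm_expand (α (q, v)) v).symm
  -- contraction with the christoffel term
  have hclaim2 : ∑ l, (∑ i, ∑ j, christoffel g ginv l i j q * v i * v j) * u l
      = (1/2) * S := by
    have hΓ : ∀ i j, ∑ l, christoffel g ginv l i j q * u l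
        = (1/2) * ∑ k, v k * (D i j k + D j i k - D k i j) := by
      intro i j
      have h1 : ∀ l, christoffel g ginv l i j q * u l
          = (1/2) * ((∑ k, ginv q l k * (D i j k + D j i k - D k i j)) * (∑ m, v m * G l m)) := by
        intro l
        rw [christoffel, huG]
        ring
      calc ∑ l, christoffel g ginv l i j q * u l
          = (1/2) * ∑ l, (∑ k, ginv q l k * (D i j k + D j i k - D k i j)) * (∑ m, v m * G l m) := by
            rw [Finset.mul_sum]
            exact Finset.sum_congr rfl fun l _ => h1 l
        _ = (1/2) * ∑ k, v k * (D i j k + D j i k - D k i j) := by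
            rw [contract G (fun l k => ginv q l k) hδ _ v]
    calc ∑ l, (∑ i, ∑ j, christoffel g ginv l i j q * v i * v j) * u l
        = ∑ l, ∑ i, ∑ j, christoffel g ginv l i j q * v i * v j * u l := by
          refine Finset.sum_congr rfl fun l _ => ?_
          rw [Finset.sum_mul]
          exact Finset.sum_congr rfl fun i _ => by rw [Finset.sum_mul]
      _ = ∑ i, ∑ l, ∑ j, christoffel g ginv l i j q * v i * v j * u l := Finset.sum_comm
      _ = ∑ i, ∑ j, ∑ l, christoffel g ginv l i j q * v i * v j * u l :=
          Finset.sum_congr rfl fun i _ => Finset.sum_comm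
      _ = ∑ i, ∑ j, (v i * v j) * ∑ l, christoffel g ginv l i j q * u l := by
          refine Finset.sum_congr rfl fun i _ => Finset.sum_congr rfl fun j _ => ?_
          rw [Finset.mul_sum]
          exact Finset.sum_congr rfl fun l _ => by ring
      _ = ∑ i, ∑ j, (v i * v j) * ((1/2) * ∑ k, v k * (D i j k + D j i k - D k i j)) := by
          refine Finset.sum_congr rfl fun i _ => Finset.sum_congr rfl fun j _ => ?_
          rw [hΓ]
      _ = ∑ i, ∑ j, ∑ k, ((1/2) * (v i * v j * v k * D i j k)
            + (1/2) * (v i * v j * v k * D j i k) - (1/2) * (v i * v j * v k * D k i j)) := by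
          refine Finset.sum_congr rfl fun i _ => Finset.sum_congr rfl fun j _ => ?_
          rw [Finset.mul_sum, Finset.mul_sum]
          exact Finset.sum_congr rfl fun k _ => by ring
      _ = (1/2) * S := by
          have hsplit : ∀ (f h p : Fin n → Fin n → Fin n → ℝ),
              (∑ i, ∑ j, ∑ k, ((1/2) * f i j k + (1/2) * h i j k - (1/2) * p i j k))
              = (1/2) * (∑ i, ∑ j, ∑ k, f i j k) + (1/2) * (∑ i, ∑ j, ∑ k, h i j k)
                - (1/2) * (∑ i, ∑ j, ∑ k, p i j k) := by
            intro f h p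
            simp [Finset.sum_add_distrib, Finset.sum_sub_distrib, Finset.mul_sum]
          rw [hsplit]
          have hT1 : (∑ i, ∑ j, ∑ k, v i * v j * v k * D i j k) = S := rfl
          have hT2 : (∑ i, ∑ j, ∑ k, v i * v j * v k * D j i k) = S := by
            rw [Finset.sum_comm]
            exact Finset.sum_congr rfl fun i _ => Finset.sum_congr rfl fun j _ =>
              Finset.sum_congr rfl fun k _ => by ring
          have hT3 : (∑ i, ∑ j, ∑ k, v i * v j * v k * D k i j) = S := by
            have : (∑ i, ∑ j, ∑ k, v i * v j * v k * D k i j)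
                = ∑ i, ∑ k, ∑ j, v i * v j * v k * D k i j :=
              Finset.sum_congr rfl fun i _ => Finset.sum_comm
            rw [this, Finset.sum_comm]
            exact Finset.sum_congr rfl fun k _ => Finset.sum_congr rfl fun i _ =>
              Finset.sum_congr rfl fun j _ => by ring
          rw [hT1, hT2, hT3]
          ring
  -- assemble
  have hsum : ∑ l, a l * u l
      = -(α (q, v) v + (1/2) * S) := by
    calc ∑ l, a l * u l
        = ∑ l, (-((∑ k, ginv q l k * α (q, v) (basisVec k))
            + ∑ i, ∑ j, christoffel g ginv l i j q * v i * v j)) * u l := by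
          refine Finset.sum_congr rfl fun l _ => by rw [ha l]
      _ = -((∑ l, (∑ k, ginv q l k * α (q, v) (basisVec k)) * u l)
            + ∑ l, (∑ i, ∑ j, christoffel g ginv l i j q * v i * v j) * u l) := by
          rw [← Finset.sum_add_distrib, ← Finset.sum_neg_distrib]
          exact Finset.sum_congr rfl fun l _ => by ring
      _ = -(α (q, v) v + (1/2) * S) := by rw [hclaim1, hclaim2]
  rw [hfirst, hgav, hgva, hsum]
  ring

end KeyB

section Energy
variable {n : ℕ}

/-- Along a curve satisfying the Newton equation at `t₀`, the energy
`t ↦ g(x t)(x' t, x' t)` has derivative `-2 α(x t₀, x' t₀)(x' t₀)` at `t₀`. -/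
lemma energy_hasDerivAt {U : Set (Fin n → ℝ)} (hU : IsOpen U)
    (g : (Fin n → ℝ) → ((Fin n → ℝ) →L[ℝ] (Fin n → ℝ) →L[ℝ] ℝ))
    (hg : ContDiffOn ℝ (⊤ : ℕ∞) g U)
    (hsymm : ∀ q ∈ U, ∀ u w : Fin n → ℝ, g q u w = g q w u)
    (ginv : (Fin n → ℝ) → Fin n → Fin n → ℝ)
    (hginv : ∀ q ∈ U, ∀ i j : Fin n,
      (∑ k, g q (basisVec i) (basisVec k) * ginv q k j) = if i = j then 1 else 0)
    (α : (Fin n → ℝ) × (Fin n → ℝ) → ((Fin n → ℝ) →L[ℝ] ℝ))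
    (x x' x'' : ℝ → (Fin n → ℝ)) {t₀ : ℝ}
    (hq : x t₀ ∈ U)
    (hdx : HasDerivAt x (x' t₀) t₀)
    (hdx' : HasDerivAt x' (x'' t₀) t₀)
    (hN : ∀ l : Fin n,
      x'' t₀ l = -((∑ k, ginv (x t₀) l k * α (x t₀, x' t₀) (basisVec k))
        + ∑ i, ∑ j, christoffel g ginv l i j (x t₀) * x' t₀ i * x' t₀ j)) :
    HasDerivAt (fun s => g (x s) (x' s) (x' s))
      (-(2 * α (x t₀, x' t₀) (x' t₀))) t₀ := by
  have hdg : DifferentiableAt ℝ g (x t₀) :=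
    (hg.contDiffAt (hU.mem_nhds hq)).differentiableAt (by simp)
  have h1 : HasDerivAt (fun s => g (x s)) (fderiv ℝ g (x t₀) (x' t₀)) t₀ :=
    hdg.hasFDerivAt.comp_hasDerivAt (E := (Fin n → ℝ) →L[ℝ] (Fin n → ℝ) →L[ℝ] ℝ) t₀ hdx
  have h2 := h1.clm_apply hdx'
  have h3 := h2.clm_apply hdx'
  have key := keyB hU g hg hsymm ginv hginv α hq (x' t₀) (x'' t₀) hN
  convert h3 using 1
  case e'_4 => rfl
  case e'_5 => rfl
  simp only [ContinuousLinearMap.add_apply]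
  linarith [key]

end Energy

section Smooth
variable {n : ℕ}

lemma christoffel_contDiffAt {U : Set (Fin n → ℝ)} (hU : IsOpen U)
    (g : (Fin n → ℝ) → ((Fin n → ℝ) →L[ℝ] (Fin n → ℝ) →L[ℝ] ℝ))
    (hg : ContDiffOn ℝ (⊤ : ℕ∞) g U)
    (ginv : (Fin n → ℝ) → Fin n → Fin n → ℝ)
    (hginv : ∀ q ∈ U, ∀ i j : Fin n,
      (∑ k, g q (basisVec i) (basisVec k) * ginv q k j) = if i = j then 1 else 0)
    {q₀ : Fin n → ℝ} (hq₀ : q₀ ∈ U) (l i j : Fin n) :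
    ContDiffAt ℝ (⊤ : ℕ∞) (fun q => christoffel g ginv l i j q) q₀ := by
  have hD : ∀ b c a : Fin n, ContDiffAt ℝ (⊤ : ℕ∞)
      (fun q => fderiv ℝ (fun p => g p (basisVec b) (basisVec c)) q (basisVec a)) q₀ := by
    intro b c a
    have hbc : ContDiffAt ℝ (⊤ : ℕ∞) (fun p => g p (basisVec b) (basisVec c)) q₀ :=
      (entry_contDiffOn g hg _ _).contDiffAt (hU.mem_nhds hq₀)
    have hfd : ContDiffAt ℝ (⊤ : ℕ∞)
        (fderiv ℝ (fun p => g p (basisVec b) (basisVec c))) q₀ :=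
      hbc.fderiv_right (by norm_cast)
    exact ((ContinuousLinearMap.apply ℝ ℝ (basisVec a)).contDiff.contDiffAt).comp q₀ hfd
  unfold christoffel
  refine ContDiffAt.mul contDiffAt_const ?_
  refine ContDiffAt.sum fun k _ => ContDiffAt.mul
    (ginv_contDiffAt hU g hg ginv hginv hq₀ l k) (((hD j k i).add (hD i k j)).sub (hD i j k))

end Smooth

/-- A smooth horizontal 1-form `α` is a contact form if and only if every
twice-differentiable curve solving the Newton equation of the mechanical system `(U, g, α)`
has tangent field of constant length. (The converse direction uses local existence of
solutions through every initial condition, by Picard–Lindelöf.) -/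
theorem contact_iff_constant_speed {n : ℕ} (U : Set (Fin n → ℝ)) (hU : IsOpen U)
    (g : (Fin n → ℝ) → ((Fin n → ℝ) →L[ℝ] (Fin n → ℝ) →L[ℝ] ℝ))
    (hg : ContDiffOn ℝ (⊤ : ℕ∞) g U)
    (hsymm : ∀ q ∈ U, ∀ u w : Fin n → ℝ, g q u w = g q w u)
    (hnondeg : ∀ q ∈ U, ∀ u : Fin n → ℝ, (∀ w, g q u w = 0) → u = 0)
    (ginv : (Fin n → ℝ) → Fin n → Fin n → ℝ)
    (hginv : ∀ q ∈ U, ∀ i j : Fin n,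
      (∑ k, g q (basisVec i) (basisVec k) * ginv q k j) = if i = j then 1 else 0)
    (α : (Fin n → ℝ) × (Fin n → ℝ) → ((Fin n → ℝ) →L[ℝ] ℝ))
    (hα : ContDiffOn ℝ (⊤ : ℕ∞) α (U ×ˢ (Set.univ : Set (Fin n → ℝ)))) :
    (∀ (q : Fin n → ℝ), q ∈ U → ∀ v : Fin n → ℝ, α (q, v) v = 0)
    ↔
    (∀ (I : Set ℝ), IsOpen I → I.OrdConnected →
      ∀ x x' x'' : ℝ → (Fin n → ℝ),
        (∀ t ∈ I, x t ∈ U) →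
        (∀ t ∈ I, HasDerivAt x (x' t) t) →
        (∀ t ∈ I, HasDerivAt x' (x'' t) t) →
        (∀ t ∈ I, ∀ l : Fin n,
          x'' t l = -((∑ k, ginv (x t) l k * α (x t, x' t) (basisVec k))
            + ∑ i, ∑ j, christoffel g ginv l i j (x t) * x' t i * x' t j)) →
        ∀ t₁ ∈ I, ∀ t₂ ∈ I,
          g (x t₁) (x' t₁) (x' t₁) = g (x t₂) (x' t₂) (x' t₂)) := by
  constructor
  · -- contact form ⇒ constant speed
    intro hcontact I hIopen hIconn x x' x'' hxU hx' hx'' hNewton t₁ ht₁ t₂ ht₂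
    set 𝓔 : ℝ → ℝ := fun s => g (x s) (x' s) (x' s) with h𝓔
    have hderiv : ∀ t ∈ I, HasDerivAt 𝓔 0 t := by
      intro t ht
      have h := energy_hasDerivAt hU g hg hsymm ginv hginv α x x' x''
        (hxU t ht) (hx' t ht) (hx'' t ht) (hNewton t ht)
      rw [hcontact (x t) (hxU t ht) (x' t)] at h
      simpa using h
    have hconv : Convex ℝ I := convex_iff_ordConnected.mpr hIconn
    refine hconv.is_const_of_fderivWithin_eq_zero
      (fun t ht => (hderiv t ht).differentiableAt.differentiableWithinAt) ?_ ht₁ ht₂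
    intro t ht
    rw [(hderiv t ht).differentiableAt.fderivWithin (hIopen.uniqueDiffOn t ht),
      (hderiv t ht).hasFDerivAt.fderiv]
    refine ContinuousLinearMap.ext fun s => ?_
    simp
  · -- constant speed ⇒ contact form
    intro hRHS q₀ hq₀ v₀
    -- the Newton vector field
    set N : ((Fin n → ℝ) × (Fin n → ℝ)) → Fin n → ℝ := fun p l =>
      -((∑ k, ginv p.1 l k * α p (basisVec k))
        + ∑ i, ∑ j, christoffel g ginv l i j p.1 * p.2 i * p.2 j) with hN
    set F : ((Fin n → ℝ) × (Fin n → ℝ)) → ((Fin n → ℝ) × (Fin n → ℝ)) :=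
      fun p => (p.2, N p) with hF
    have hFsmooth : ContDiffAt ℝ 1 F (q₀, v₀) := by
      refine ContDiffAt.prodMk contDiffAt_snd ?_
      rw [contDiffAt_pi]
      intro l
      refine ContDiffAt.neg (ContDiffAt.add ?_ ?_)
      · refine ContDiffAt.sum fun k _ => ContDiffAt.mul ?_ ?_
        · exact (((ginv_contDiffAt hU g hg ginv hginv hq₀ l k).comp (q₀, v₀)
            contDiffAt_fst).of_le (m := 1) (by exact_mod_cast le_top))
        · have hαAt : ContDiffAt ℝ (⊤ : ℕ∞) α (q₀, v₀) :=
            hα.contDiffAt ((hU.prod isOpen_univ).mem_nhds (by simp [hq₀]))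
          exact (((ContinuousLinearMap.apply ℝ ℝ (basisVec k)).contDiff.contDiffAt).comp
            (q₀, v₀) hαAt).of_le (by exact_mod_cast le_top)
      · refine ContDiffAt.sum fun i _ => ContDiffAt.sum fun j _ => ?_
        refine ContDiffAt.mul (ContDiffAt.mul ?_ ?_) ?_
        · exact ((christoffel_contDiffAt hU g hg ginv hginv hq₀ l i j).comp (q₀, v₀)
            contDiffAt_fst).of_le (m := 1) (by exact_mod_cast le_top)
        · exact ((ContinuousLinearMap.proj i : (Fin n → ℝ) →L[ℝ] ℝ).contDiff.contDiffAt.comp (q₀, v₀)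
            contDiffAt_snd).of_le (by exact_mod_cast le_top)
        · exact ((ContinuousLinearMap.proj j : (Fin n → ℝ) →L[ℝ] ℝ).contDiff.contDiffAt.comp (q₀, v₀)
            contDiffAt_snd).of_le (by exact_mod_cast le_top)
    -- local solution of the ODE
    obtain ⟨f, hf0, ε, hε, hf⟩ :=
      ContDiffAt.exists_forall_mem_closedBall_exists_eq_forall_mem_Ioo_hasDerivAt₀ hFsmooth (0 : ℝ)
    set x : ℝ → (Fin n → ℝ) := fun t => (f t).1 with hx
    set y : ℝ → (Fin n → ℝ) := fun t => (f t).2 with hy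
    have hmem0 : (0 : ℝ) ∈ Set.Ioo (0 - ε) (0 + ε) := by
      constructor <;> simp [hε]
    have hdx : ∀ t ∈ Set.Ioo (0 - ε) (0 + ε), HasDerivAt x (y t) t := by
      intro t ht
      have := ((ContinuousLinearMap.fst ℝ (Fin n → ℝ) (Fin n → ℝ)).hasFDerivAt).comp_hasDerivAt
        t (hf t ht)
      exact this
    have hdy : ∀ t ∈ Set.Ioo (0 - ε) (0 + ε), HasDerivAt y (N (f t)) t := by
      intro t ht
      have := ((ContinuousLinearMap.snd ℝ (Fin n → ℝ) (Fin n → ℝ)).hasFDerivAt).comp_hasDerivAt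
        t (hf t ht)
      exact this
    have hx0 : x 0 = q₀ := by show (f 0).1 = q₀; rw [hf0]
    have hy0 : y 0 = v₀ := by show (f 0).2 = v₀; rw [hf0]
    -- shrink so that the curve stays in U
    have hcont : ∀ᶠ t in nhds (0 : ℝ), x t ∈ U := by
      have hcx : ContinuousAt x 0 := (hdx 0 hmem0).continuousAt
      have : U ∈ nhds (x 0) := hU.mem_nhds (by rw [hx0]; exact hq₀)
      exact hcx.preimage_mem_nhds this
    obtain ⟨δ, hδpos, hδ⟩ := Metric.eventually_nhds_iff.mp hcont
    set r : ℝ := min δ ε with hr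
    have hrpos : 0 < r := lt_min hδpos hε
    set I : Set ℝ := Set.Ioo (-r) r with hI
    have h0I : (0 : ℝ) ∈ I := by constructor <;> simp [hrpos]
    have hsub : I ⊆ Set.Ioo (0 - ε) (0 + ε) := by
      intro t ht
      obtain ⟨h1, h2⟩ := ht
      constructor
      · have : -ε ≤ -r := neg_le_neg (min_le_right δ ε)
        linarith
      · have : r ≤ ε := min_le_right δ ε
        linarith
    have hxU : ∀ t ∈ I, x t ∈ U := by
      intro t ht
      apply hδ
      rw [Real.dist_eq, sub_zero, abs_lt]
      exact ⟨by linarith [ht.1, min_le_left δ ε],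
        by linarith [ht.2, min_le_left δ ε]⟩
    -- apply the constant-speed hypothesis
    have hconst := hRHS I isOpen_Ioo Set.ordConnected_Ioo x y (fun t => N (f t))
      hxU (fun t ht => hdx t (hsub ht)) (fun t ht => hdy t (hsub ht))
      (fun t ht l => by simp only [hN]; rfl) 
    -- energy is locally constant, so its derivative at 0 vanishes
    have hEd : HasDerivAt (fun s => g (x s) (y s) (y s)) (-(2 * α (x 0, y 0) (y 0))) 0 := by
      refine energy_hasDerivAt hU g hg hsymm ginv hginv α x y (fun t => N (f t))
        (hxU 0 h0I) (hdx 0 hmem0) (hdy 0 hmem0) ?_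
      intro l
      simp only [hN]
      rfl
    have hEconst : (fun s => g (x s) (y s) (y s)) =ᶠ[nhds 0]
        (fun _ => g (x 0) (y 0) (y 0)) := by
      filter_upwards [isOpen_Ioo.mem_nhds h0I] with t ht
      exact hconst t ht 0 h0I
    have hEd0 : HasDerivAt (fun s => g (x s) (y s) (y s)) 0 0 :=
      (hasDerivAt_const 0 (g (x 0) (y 0) (y 0))).congr_of_eventuallyEq hEconst
    have := hEd.unique hEd0
    rw [hx0, hy0] at this
    linarith
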